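/- Any finite set of points in ℝ^n of diameter Δ is contained in a closed ball of radius at most Δ/√2. -/

import Mathlib

open Finset Metric

set_option maxHeartbeats 1000000 in
theorem stmt19 (n : ℕ) (P : Finset (EuclideanSpace ℝ (Fin n))) (Δ : ℝ)
    (hΔ : ∀ x ∈ P, ∀ y ∈ P, dist x y ≤ Δ) :
    ∃ c : EuclideanSpace ℝ (Fin n), ∀ x ∈ P, dist x c ≤ Δ / Real.sqrt 2 := by
  rcases P.eq_empty_or_nonempty with rfl | hP
  · exact ⟨0, by simp⟩
  obtain ⟨p0, hp0⟩ := id hP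
  have hΔ0 : 0 ≤ Δ := le_trans dist_nonneg (hΔ p0 hp0 p0 hp0)
  set f : EuclideanSpace ℝ (Fin n) → ℝ := fun c => P.sup' hP (fun x => dist x c) with hfdef
  have hfc : Continuous f :=
    Continuous.finset_sup'_apply hP (fun x _ => continuous_const.dist continuous_id)
  have hfnn : ∀ c, 0 ≤ f c := fun c =>
    le_trans dist_nonneg (Finset.le_sup' (fun x => dist x c) hp0)
  -- minimize f over a big closed ball
  obtain ⟨c, hcball, hcmin⟩ :=
    (isCompact_closedBall p0 (f p0)).exists_isMinOn
      ⟨p0, mem_closedBall_self (hfnn p0)⟩ hfc.continuousOn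
  have hle : ∀ x ∈ P, dist x c ≤ f c := fun x hx => Finset.le_sup' (fun x => dist x c) hx
  have hmin : ∀ c', f c ≤ f c' := by
    intro c'
    by_cases h : c' ∈ closedBall p0 (f p0)
    · exact hcmin h
    · have h1 : f p0 < dist p0 c' := by
        rw [dist_comm]; exact not_le.mp (by simpa [Metric.mem_closedBall] using h)
      have h2 : dist p0 c' ≤ f c' := Finset.le_sup' (fun x => dist x c') hp0
      exact le_trans (hcmin (mem_closedBall_self (hfnn p0))) (le_of_lt (lt_of_lt_of_le h1 h2))
  set r : ℝ := f c with hrdef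
  have hr0 : 0 ≤ r := hfnn c
  -- key claim
  have key : 2 * r ^ 2 ≤ Δ ^ 2 := by
    by_contra hcon
    push_neg at hcon
    set δ : ℝ := (2 * r ^ 2 - Δ ^ 2) / 2 with hδdef
    have hδ : 0 < δ := by simp only [hδdef]; nlinarith [hΔ0, hr0]
    have hrpos : 0 < r := by nlinarith
    set A : Finset (EuclideanSpace ℝ (Fin n)) := P.filter (fun x => dist x c = r) with hA
    have hAne : A.Nonempty := by
      obtain ⟨x, hx, hxe⟩ := Finset.exists_mem_eq_sup' hP (fun x => dist x c)
      exact ⟨x, Finset.mem_filter.mpr ⟨hx, hxe.symm⟩⟩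
    have hAcard : 0 < (A.card : ℝ) := by
      exact_mod_cast Finset.card_pos.mpr hAne
    set g : EuclideanSpace ℝ (Fin n) := (A.card : ℝ)⁻¹ • (∑ y ∈ A, y) with hg
    have hAr : ∀ x ∈ A, dist x c = r := fun x hx => (Finset.mem_filter.mp hx).2
    have hinner : ∀ x ∈ A, ∀ y ∈ A, δ ≤ (inner ℝ (x - c) (y - c) : ℝ) := by
      intro x hx y hy
      have hxy : dist x y ≤ Δ :=
        hΔ x (Finset.mem_filter.mp hx).1 y (Finset.mem_filter.mp hy).1
      have e1 : ‖x - c‖ = r := by rw [← dist_eq_norm]; exact hAr x hx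
      have e2 : ‖y - c‖ = r := by rw [← dist_eq_norm]; exact hAr y hy
      have e3 : ‖x - y‖ ≤ Δ := by rw [← dist_eq_norm]; exact hxy
      have e4 : ‖(x - c) - (y - c)‖ ^ 2 =
          ‖x - c‖ ^ 2 - 2 * (inner ℝ (x - c) (y - c) : ℝ) + ‖y - c‖ ^ 2 :=
        norm_sub_sq_real (x - c) (y - c)
      rw [sub_sub_sub_cancel_right] at e4
      have e5 : (0:ℝ) ≤ ‖x - y‖ := norm_nonneg _
      nlinarith [e4, e1, e2, e3, e5, hΔ0]
    have hgc : g - c = (A.card : ℝ)⁻¹ • ∑ y ∈ A, (y - c) := by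
      rw [Finset.sum_sub_distrib, smul_sub, ← hg, Finset.sum_const, ← Nat.cast_smul_eq_nsmul ℝ,
        smul_smul, inv_mul_cancel₀ (ne_of_gt hAcard), one_smul]
    have hgin : ∀ x ∈ A, δ ≤ (inner ℝ (x - c) (g - c) : ℝ) := by
      intro x hx
      rw [hgc, real_inner_smul_right, inner_sum]
      have hsum : (A.card : ℝ) * δ ≤ ∑ y ∈ A, (inner ℝ (x - c) (y - c) : ℝ) := by
        calc (A.card : ℝ) * δ = ∑ _y ∈ A, δ := by rw [Finset.sum_const, nsmul_eq_mul]
        _ ≤ ∑ y ∈ A, (inner ℝ (x - c) (y - c) : ℝ) :=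
          Finset.sum_le_sum (fun y hy => hinner x hx y hy)
      calc δ = (A.card : ℝ)⁻¹ * ((A.card : ℝ) * δ) := by
            rw [← mul_assoc, inv_mul_cancel₀ (ne_of_gt hAcard), one_mul]
        _ ≤ (A.card : ℝ)⁻¹ * ∑ y ∈ A, (inner ℝ (x - c) (y - c) : ℝ) := by
            exact mul_le_mul_of_nonneg_left hsum (inv_nonneg.mpr (le_of_lt hAcard))
    -- the second-largest distance
    set s : ℝ := P.sup' hP (fun x => if dist x c = r then 0 else dist x c) with hs
    have hsr : s < r := by
      rw [hs, Finset.sup'_lt_iff]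
      intro x hx
      by_cases hxr : dist x c = r
      · simpa [hxr] using hrpos
      · simp only [if_neg hxr]
        exact lt_of_le_of_ne (hle x hx) hxr
    have hsle : ∀ x ∈ P, dist x c ≠ r → dist x c ≤ s := by
      intro x hx hxr
      have h := Finset.le_sup' (fun x => if dist x c = r then 0 else dist x c) hx
      simp only [if_neg hxr] at h
      exact h
    set G : ℝ := ‖g - c‖ with hG
    have hG0 : 0 ≤ G := norm_nonneg _
    set t : ℝ := min (δ / (G ^ 2 + 1)) ((r - s) / (G + 1)) with ht
    have ht0 : 0 < t := by
      apply lt_min (by positivity)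
      apply div_pos (by linarith) (by linarith)
    have ht1 : t ≤ δ / (G ^ 2 + 1) := min_le_left _ _
    have ht2 : t ≤ (r - s) / (G + 1) := min_le_right _ _
    set c' : EuclideanSpace ℝ (Fin n) := c + t • (g - c) with hc'
    have hdcc' : dist c c' = t * G := by
      rw [hc', dist_eq_norm, show c - (c + t • (g - c)) = -(t • (g - c)) by abel,
        norm_neg, norm_smul, Real.norm_eq_abs, abs_of_pos ht0]
    have hfc' : f c' < r := by
      rw [hfdef, Finset.sup'_lt_iff]
      intro x hx
      by_cases hxr : dist x c = r
      · have hxA : x ∈ A := Finset.mem_filter.mpr ⟨hx, hxr⟩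
        have hxc' : x - c' = (x - c) - t • (g - c) := by rw [hc']; abel
        have e4 : ‖(x - c) - t • (g - c)‖ ^ 2 =
            ‖x - c‖ ^ 2 - 2 * (inner ℝ (x - c) (t • (g - c)) : ℝ) + ‖t • (g - c)‖ ^ 2 :=
          norm_sub_sq_real (x - c) (t • (g - c))
        have e1 : ‖x - c‖ = r := by rw [← dist_eq_norm]; exact hxr
        have e2 : ‖t • (g - c)‖ = t * G := by
          rw [norm_smul, Real.norm_eq_abs, abs_of_pos ht0, hG]
        have e3 : (inner ℝ (x - c) (t • (g - c)) : ℝ) = t * (inner ℝ (x - c) (g - c) : ℝ) :=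
          real_inner_smul_right _ _ _
        have e5 : δ ≤ (inner ℝ (x - c) (g - c) : ℝ) := hgin x hxA
        have e6 : t * G ^ 2 ≤ δ := by
          have h9 : t * (G ^ 2 + 1) ≤ δ := (le_div_iff₀ (by positivity)).mp ht1
          nlinarith [ht0]
        have e7 : ‖x - c'‖ ^ 2 < r ^ 2 := by
          rw [hxc', e4, e3, e2, e1]
          nlinarith [e5, e6, ht0, hδ]
        have e8 : 0 ≤ ‖x - c'‖ := norm_nonneg _
        rw [dist_eq_norm]
        nlinarith [e7, e8, hrpos]
      · have h1 : dist x c' ≤ dist x c + dist c c' := dist_triangle x c c'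
        have h2 : dist x c ≤ s := hsle x hx hxr
        have h3 : t * G < r - s := by
          have h9 : t * (G + 1) ≤ r - s := (le_div_iff₀ (by linarith)).mp ht2
          nlinarith [ht0]
        rw [hdcc'] at h1
        linarith
    have := hmin c'
    linarith
  -- conclude
  have hsq : (Real.sqrt 2) ^ 2 = 2 := Real.sq_sqrt (by norm_num)
  have h2 : (0:ℝ) < Real.sqrt 2 := by positivity
  refine ⟨c, fun x hx => le_trans (hle x hx) ?_⟩
  rw [le_div_iff₀ h2]
  nlinarith [hr0, hΔ0, key, hsq, h2]
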